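/- For every n ≥ 2 there exists a subgraph independent probability distribution on the simple graphs with vertex set {1,...,n} such that every unordered pair e of distinct vertices has marginal probability Pr[X_e] exactly (1/2)·(1 − tan²(π/(2n))) of being an edge, and every graph in the support of the distribution is disconnected. -/

import Mathlib

open scoped Classical

noncomputable def pr {n : ℕ} (μ : SimpleGraph (Fin n) → ℝ) (P : SimpleGraph (Fin n) → Prop) : ℝ :=
  ∑ G : SimpleGraph (Fin n), if P G then μ G else 0

def IsDist {n : ℕ} (μ : SimpleGraph (Fin n) → ℝ) : Prop :=
  (∀ G, 0 ≤ μ G) ∧ ∑ G : SimpleGraph (Fin n), μ G = 1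

def SubgraphIndep {n : ℕ} (μ : SimpleGraph (Fin n) → ℝ) : Prop :=
  ∀ V W : Set (Fin n), Disjoint V W →
    ∀ (HV : SimpleGraph V) (HW : SimpleGraph W),
      pr μ (fun G => G.induce V = HV ∧ G.induce W = HW)
        = pr μ (fun G => G.induce V = HV) * pr μ (fun G => G.induce W = HW)

namespace SILB

noncomputable def t (n : ℕ) : ℝ := Real.pi / (2 * n)
noncomputable def c (n : ℕ) : ℝ := 1 / (2 * Real.cos (t n))
def eps (b : Bool) : ℝ := if b then 1 else -1
noncomputable def q (n : ℕ) (b : Bool) : ℂ :=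
  (c n : ℂ) * Complex.exp ((eps b * t n : ℝ) * Complex.I)

variable {n : ℕ}

lemma t_pos (hn : 2 ≤ n) : 0 < t n := by
  have : (0:ℝ) < n := by positivity
  exact div_pos Real.pi_pos (by linarith)

lemma t_le (hn : 2 ≤ n) : t n ≤ Real.pi / 4 := by
  have h2 : (2:ℝ) ≤ n := by exact_mod_cast hn
  rw [t, div_le_div_iff₀ (by linarith) (by norm_num)]
  nlinarith [Real.pi_pos]

lemma cos_t_pos (hn : 2 ≤ n) : 0 < Real.cos (t n) := by
  apply Real.cos_pos_of_mem_Ioo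
  constructor
  · linarith [t_pos hn, Real.pi_pos]
  · linarith [t_le hn, Real.pi_pos]

lemma c_pos (hn : 2 ≤ n) : 0 < c n := by
  have := cos_t_pos hn
  rw [c]; positivity

lemma nt (hn : 2 ≤ n) : (n : ℝ) * t n = Real.pi / 2 := by
  have : (n:ℝ) ≠ 0 := by positivity
  field_simp [t]
  rw [t]; field_simp

lemma q_sum (hn : 2 ≤ n) : q n true + q n false = 1 := by
  have hc := cos_t_pos hn
  have e1 : eps true = (1:ℝ) := rfl
  have e2 : eps false = (-1:ℝ) := rfl
  simp only [q, e1, e2]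
  rw [show ((1 * t n : ℝ) : ℂ) = ((t n : ℝ):ℂ) by push_cast; ring,
      show ((-1 * t n : ℝ) : ℂ) = -((t n : ℝ):ℂ) by push_cast; ring]
  rw [Complex.exp_mul_I, Complex.exp_mul_I, Complex.cos_neg, Complex.sin_neg]
  rw [show (c n : ℂ) * (Complex.cos (t n) + Complex.sin (t n) * Complex.I) +
        (c n : ℂ) * (Complex.cos (t n) + -Complex.sin (t n) * Complex.I)
      = (c n : ℂ) * (2 * Complex.cos (t n)) by ring]
  rw [← Complex.ofReal_cos]
  rw [c]
  rw [show ((↑(1 / (2 * Real.cos (t n))) : ℂ)) * (2 * ↑(Real.cos (t n)))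
      = ((1 / (2 * Real.cos (t n)) * (2 * Real.cos (t n)) : ℝ) : ℂ) by push_cast; ring]
  rw [div_mul_cancel₀]
  · norm_num
  · positivity

lemma q_diff (hn : 2 ≤ n) : q n true - q n false = (Real.tan (t n) : ℂ) * Complex.I := by
  have hc := cos_t_pos hn
  have e1 : eps true = (1:ℝ) := rfl
  have e2 : eps false = (-1:ℝ) := rfl
  simp only [q, e1, e2]
  rw [show ((1 * t n : ℝ) : ℂ) = ((t n : ℝ):ℂ) by push_cast; ring,
      show ((-1 * t n : ℝ) : ℂ) = -((t n : ℝ):ℂ) by push_cast; ring]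
  rw [Complex.exp_mul_I, Complex.exp_mul_I, Complex.cos_neg, Complex.sin_neg]
  rw [show ((c n : ℂ)) * (Complex.cos (t n) + Complex.sin (t n) * Complex.I) -
        (c n : ℂ) * (Complex.cos (t n) + -Complex.sin (t n) * Complex.I)
      = (2 * (c n : ℂ) * Complex.sin (t n)) * Complex.I by ring]
  rw [← Complex.ofReal_sin]
  congr 1
  rw [c, Real.tan_eq_sin_div_cos]
  rw [show (2 : ℂ) * ((1 / (2 * Real.cos (t n)) : ℝ) : ℂ) * ((Real.sin (t n) : ℝ):ℂ)
      = ((2 * (1 / (2 * Real.cos (t n))) * Real.sin (t n) : ℝ) : ℂ) by push_cast; ring]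
  norm_cast
  field_simp

lemma eps_not (b : Bool) : eps (!b) = - eps b := by cases b <;> simp [eps]

lemma q_not (b : Bool) : q n (!b) = (starRingEnd ℂ) (q n b) := by
  rw [q, q, map_mul, Complex.conj_ofReal, ← Complex.exp_conj, map_mul, Complex.conj_I,
    Complex.conj_ofReal, eps_not]
  push_cast
  ring_nf


lemma sum_prod {ι : Type*} [Fintype ι] [DecidableEq ι] (h : ι → Bool → ℂ) :
    ∑ s : ι → Bool, ∏ x, h x (s x) = ∏ x, (h x true + h x false) := by
  rw [← Fintype.prod_sum (κ := fun _ : ι => Bool) h]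
  refine Finset.prod_congr rfl fun x _ => ?_
  simp [Fintype.sum_bool]

noncomputable def w (n : ℕ) (s : Fin n → Bool) : ℝ := (∏ x, q n (s x)).re

lemma prod_q_eq (s : Fin n → Bool) :
    ∏ x, q n (s x)
      = ((c n ^ n : ℝ) : ℂ) * Complex.exp ((((∑ x, eps (s x)) * t n : ℝ) : ℂ) * Complex.I) := by
  simp only [q]
  rw [Finset.prod_mul_distrib, Finset.prod_const, ← Complex.exp_sum]
  congr 1
  · push_cast
    rw [Finset.card_univ, Fintype.card_fin]
  · push_cast
    rw [Finset.sum_mul, Finset.sum_mul]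

lemma w_eq (s : Fin n → Bool) :
    w n s = c n ^ n * Real.cos ((∑ x, eps (s x)) * t n) := by
  rw [w, prod_q_eq, Complex.re_ofReal_mul, Complex.exp_ofReal_mul_I_re]

lemma abs_sum_eps_le (s : Fin n → Bool) : |∑ x, eps (s x)| ≤ n := by
  refine le_trans (Finset.abs_sum_le_sum_abs _ _) ?_
  have : ∀ x : Fin n, |eps (s x)| ≤ 1 := by
    intro x; cases (s x) <;> simp [eps]
  calc ∑ x, |eps (s x)| ≤ ∑ _x : Fin n, (1:ℝ) := Finset.sum_le_sum fun x _ => this x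
    _ = n := by simp

lemma w_nonneg (hn : 2 ≤ n) (s : Fin n → Bool) : 0 ≤ w n s := by
  rw [w_eq]
  have hc := c_pos hn
  refine mul_nonneg (by positivity) ?_
  apply Real.cos_nonneg_of_mem_Icc
  have habs := abs_sum_eps_le s
  have ht := t_pos hn
  have hnt := nt hn
  constructor
  · rw [← hnt]
    nlinarith [abs_le.mp habs]
  · rw [← hnt]
    nlinarith [abs_le.mp habs]

lemma w_sum (hn : 2 ≤ n) : ∑ s : Fin n → Bool, w n s = 1 := by
  have : ∑ s : Fin n → Bool, ∏ x, q n (s x) = 1 := by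
    rw [sum_prod]
    rw [Finset.prod_congr rfl fun (x : Fin n) _ => q_sum hn]
    simp
  simp only [w]
  rw [← Complex.re_sum, this, Complex.one_re]

lemma w_const (hn : 2 ≤ n) (b : Bool) : w n (fun _ => b) = 0 := by
  rw [w_eq]
  have hnt := nt hn
  have hsum : ∑ _x : Fin n, eps b = n * eps b := by simp [mul_comm]
  rw [hsum]
  cases b
  · rw [show (n : ℝ) * eps false * t n = -((n:ℝ) * t n) by simp [eps]; try ring, hnt]
    simp [Real.cos_pi_div_two]
  · rw [show (n : ℝ) * eps true * t n = (n:ℝ) * t n by simp [eps], hnt]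
    simp [Real.cos_pi_div_two]

def Γ {n : ℕ} (s : Fin n → Bool) : SimpleGraph (Fin n) where
  Adj u v := u ≠ v ∧ s u = s v
  symm := by constructor; intro a b h; exact ⟨Ne.symm h.1, h.2.symm⟩
  loopless := by constructor; intro a h; exact h.1 rfl

noncomputable def μ (n : ℕ) (G : SimpleGraph (Fin n)) : ℝ :=
  ∑ s : Fin n → Bool, if Γ s = G then w n s else 0


lemma pr_eq (P : SimpleGraph (Fin n) → Prop) :
    pr (μ n) P = ∑ s : Fin n → Bool, if P (Γ s) then w n s else 0 := by
  unfold pr μ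
  have step1 : ∀ G : SimpleGraph (Fin n),
      (if P G then ∑ s : Fin n → Bool, (if Γ s = G then w n s else 0) else 0)
        = ∑ s : Fin n → Bool, (if Γ s = G then (if P G then w n s else 0) else 0) := by
    intro G
    split_ifs with h
    · rfl
    · simp
  rw [Finset.sum_congr rfl fun G _ => step1 G, Finset.sum_comm]
  refine Finset.sum_congr rfl fun s _ => ?_
  rw [Finset.sum_ite_eq]
  simp

noncomputable def ind (p : Prop) : ℝ := if p then 1 else 0

lemma ind_true {p : Prop} (h : p) : ind p = 1 := if_pos h

lemma ind_false {p : Prop} (h : ¬ p) : ind p = 0 := if_neg h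

lemma ind_congr {p q : Prop} (h : p ↔ q) : ind p = ind q := by
  by_cases hp : p
  · rw [ind_true hp, ind_true (h.mp hp)]
  · rw [ind_false hp, ind_false (fun hq => hp (h.mpr hq))]

lemma ind_and (p q : Prop) : ind (p ∧ q) = ind p * ind q := by
  by_cases hp : p <;> by_cases hq : q <;>
    simp [ind, hp, hq]

lemma sum_ind {α : Type*} [Fintype α] (b : α) : (∑ x : α, ind (b = x)) = 1 := by
  rw [Finset.sum_eq_single_of_mem b (Finset.mem_univ b)]
  · exact ind_true rfl
  · intro x _ hx
    exact ind_false fun h => hx h.symm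

lemma pr_eq' (P : SimpleGraph (Fin n) → Prop) :
    pr (μ n) P = ∑ s : Fin n → Bool, ind (P (Γ s)) * w n s := by
  rw [pr_eq]
  refine Finset.sum_congr rfl fun s _ => ?_
  by_cases h : P (Γ s)
  · rw [if_pos h, ind_true h, one_mul]
  · rw [if_neg h, ind_false h, zero_mul]

lemma μ_eq (G : SimpleGraph (Fin n)) : μ n G = ∑ s : Fin n → Bool, ind (Γ s = G) * w n s := by
  unfold μ
  refine Finset.sum_congr rfl fun s _ => ?_
  by_cases h : Γ s = G
  · rw [if_pos h, ind_true h, one_mul]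
  · rw [if_neg h, ind_false h, zero_mul]

lemma Γ_adj (s : Fin n → Bool) (u v : Fin n) :
    (Γ s).Adj u v ↔ u ≠ v ∧ s u = s v := Iff.rfl

lemma Γ_not (s : Fin n → Bool) : (Γ (fun x => !(s x))) = Γ s := by
  ext a b
  show (a ≠ b ∧ (!(s a)) = (!(s b))) ↔ (a ≠ b ∧ s a = s b)
  cases s a <;> cases s b <;> simp

lemma induce_local (V : Set (Fin n)) (s s' : Fin n → Bool)
    (h : ∀ x, x ∈ V → s x = s' x) :
    (Γ s).induce V = (Γ s').induce V := by
  ext a b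
  show ((a : Fin n) ≠ b ∧ s a = s b) ↔ ((a : Fin n) ≠ b ∧ s' a = s' b)
  rw [h a a.2, h b b.2]

lemma re_bridge (f : (Fin n → Bool) → ℝ) :
    ∑ s : Fin n → Bool, f s * w n s
      = (∑ s : Fin n → Bool, (f s : ℂ) * ∏ x, q n (s x)).re := by
  rw [Complex.re_sum]
  refine Finset.sum_congr rfl fun s _ => ?_
  rw [Complex.re_ofReal_mul]
  rfl

lemma Z_real (f : (Fin n → Bool) → ℝ) (hf : ∀ s, f (fun x => !(s x)) = f s) :
    (∑ s : Fin n → Bool, (f s : ℂ) * ∏ x, q n (s x)).im = 0 := by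
  rw [← Complex.conj_eq_iff_im]
  rw [map_sum]
  have flipbij : Function.Bijective (fun (s : Fin n → Bool) => (fun x => !(s x))) := by
    constructor
    · intro a b hab
      funext x
      have := congrFun hab x
      simpa using this
    · intro a
      exact ⟨fun x => !(a x), by funext x; simp⟩
  have step : ∀ s : Fin n → Bool, (starRingEnd ℂ) ((f s : ℂ) * ∏ x, q n (s x))
      = (f (fun x => !(s x)) : ℂ) * ∏ x, q n (!(s x)) := by
    intro s
    rw [map_mul, Complex.conj_ofReal, hf s, map_prod]
    exact congrArg _ (Finset.prod_congr rfl fun x _ => (q_not (s x)).symm)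
  rw [Finset.sum_congr rfl fun s _ => step s]
  exact Fintype.sum_bijective _ flipbij _ _ (fun s => rfl)


lemma Zsplit (hn : 2 ≤ n) (p : Fin n → Prop) (f g : (Fin n → Bool) → ℂ)
    (hf : ∀ s s' : Fin n → Bool, (∀ x, p x → s x = s' x) → f s = f s')
    (hg : ∀ s s' : Fin n → Bool, (∀ x, ¬ p x → s x = s' x) → g s = g s') :
    (∑ s : Fin n → Bool, f s * g s * ∏ x, q n (s x))
      = (∑ s : Fin n → Bool, f s * ∏ x, q n (s x))
        * (∑ s : Fin n → Bool, g s * ∏ x, q n (s x)) := by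
  classical
  set e := (Equiv.piEquivPiSubtypeProd p (fun _ : Fin n => Bool)) with he
  have reidx : ∀ F : (Fin n → Bool) → ℂ, (∑ s : Fin n → Bool, F s)
      = ∑ a : {x // p x} → Bool, ∑ b : {x // ¬ p x} → Bool, F (e.symm (a, b)) := by
    intro F
    rw [← Equiv.sum_comp e.symm F, Fintype.sum_prod_type]
  have hmem : ∀ (a : {x // p x} → Bool) (b : {x // ¬ p x} → Bool) (x : Fin n),
      e.symm (a, b) x = if h : p x then a ⟨x, h⟩ else b ⟨x, h⟩ := by
    intro a b x
    rfl
  set A : ({x // p x} → Bool) → ℂ := fun a => f (e.symm (a, fun _ => true)) with hA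
  set B : ({x // ¬ p x} → Bool) → ℂ := fun b => g (e.symm ((fun _ => true), b)) with hB
  set P : ({x // p x} → Bool) → ℂ := fun a => ∏ x : {x // p x}, q n (a x) with hP
  set Q : ({x // ¬ p x} → Bool) → ℂ := fun b => ∏ x : {x // ¬ p x}, q n (b x) with hQ
  have hfa : ∀ a b, f (e.symm (a, b)) = A a := by
    intro a b
    apply hf
    intro x hx
    rw [hmem, hmem, dif_pos hx, dif_pos hx]
  have hgb : ∀ a b, g (e.symm (a, b)) = B b := by
    intro a b
    apply hg
    intro x hx
    rw [hmem, hmem, dif_neg hx, dif_neg hx]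
  have hqsplit : ∀ a b, (∏ x, q n (e.symm (a, b) x)) = P a * Q b := by
    intro a b
    rw [hP, hQ, ← Fintype.prod_subtype_mul_prod_subtype p (fun x => q n (e.symm (a, b) x))]
    congr 1
    · exact Finset.prod_congr rfl fun x _ => by rw [hmem, dif_pos x.2]
    · exact Finset.prod_congr rfl fun x _ => by rw [hmem, dif_neg x.2]
  have hP1 : (∑ a : {x // p x} → Bool, P a) = 1 := by
    rw [hP, sum_prod, Finset.prod_congr rfl fun (x : {x // p x}) _ => q_sum hn]
    simp
  have hQ1 : (∑ b : {x // ¬ p x} → Bool, Q b) = 1 := by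
    rw [hQ, sum_prod, Finset.prod_congr rfl fun (x : {x // ¬ p x}) _ => q_sum hn]
    simp
  rw [reidx (fun s => f s * g s * ∏ x, q n (s x)),
      reidx (fun s => f s * ∏ x, q n (s x)),
      reidx (fun s => g s * ∏ x, q n (s x))]
  simp only [hfa, hgb, hqsplit]
  have l1 : (∑ a : {x // p x} → Bool, ∑ b : {x // ¬ p x} → Bool, A a * B b * (P a * Q b))
      = (∑ a, A a * P a) * (∑ b, B b * Q b) := by
    rw [Fintype.sum_mul_sum]
    exact Finset.sum_congr rfl fun a _ => Finset.sum_congr rfl fun b _ => by ring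
  have l2 : (∑ a : {x // p x} → Bool, ∑ b : {x // ¬ p x} → Bool, A a * (P a * Q b))
      = (∑ a, A a * P a) := by
    calc (∑ a : {x // p x} → Bool, ∑ b : {x // ¬ p x} → Bool, A a * (P a * Q b))
        = (∑ a, A a * P a) * (∑ b, Q b) := by
          rw [Fintype.sum_mul_sum]
          exact Finset.sum_congr rfl fun a _ => Finset.sum_congr rfl fun b _ => by ring
      _ = (∑ a, A a * P a) := by rw [hQ1, mul_one]
  have l3 : (∑ a : {x // p x} → Bool, ∑ b : {x // ¬ p x} → Bool, B b * (P a * Q b))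
      = (∑ b, B b * Q b) := by
    calc (∑ a : {x // p x} → Bool, ∑ b : {x // ¬ p x} → Bool, B b * (P a * Q b))
        = (∑ a, P a) * (∑ b, B b * Q b) := by
          rw [Fintype.sum_mul_sum]
          exact Finset.sum_congr rfl fun a _ => Finset.sum_congr rfl fun b _ => by ring
      _ = (∑ b, B b * Q b) := by rw [hP1, one_mul]
  rw [l1, l2, l3]


noncomputable def hE (n : ℕ) (u v : Fin n) (x : Fin n) (b : Bool) : ℂ :=
  (if x = u then ((eps b : ℝ) : ℂ) else 1) * ((if x = v then ((eps b : ℝ) : ℂ) else 1) * q n b)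

lemma hE_prod (u v : Fin n) (huv : u ≠ v) (s : Fin n → Bool) :
    (∏ x, hE n u v x (s x)) = ((eps (s u) * eps (s v) : ℝ) : ℂ) * ∏ x, q n (s x) := by
  simp only [hE]
  rw [Finset.prod_mul_distrib, Finset.prod_mul_distrib]
  rw [Finset.prod_ite_eq' Finset.univ u (fun x => ((eps (s x) : ℝ) : ℂ)),
      Finset.prod_ite_eq' Finset.univ v (fun x => ((eps (s x) : ℝ) : ℂ))]
  simp only [Finset.mem_univ, if_pos]
  push_cast
  ring

lemma hE_sum (hn : 2 ≤ n) (u v : Fin n) (huv : u ≠ v) (x : Fin n) :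
    hE n u v x true + hE n u v x false
      = (if x = u then ((Real.tan (t n) : ℂ) * Complex.I) else 1)
        * (if x = v then ((Real.tan (t n) : ℂ) * Complex.I) else 1) := by
  by_cases hxu : x = u
  · subst hxu
    simp only [hE, eq_self_iff_true, if_true, if_neg huv]
    have h1 : ((eps true : ℝ) : ℂ) * (1 * q n true) + ((eps false : ℝ) : ℂ) * (1 * q n false)
        = q n true - q n false := by
      simp [eps]
      ring
    rw [h1, q_diff hn, mul_one]
  · by_cases hxv : x = v
    · subst hxv
      simp only [hE, eq_self_iff_true, if_true, if_neg hxu]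
      have h1 : (1 : ℂ) * (((eps true : ℝ) : ℂ) * q n true)
          + 1 * (((eps false : ℝ) : ℂ) * q n false) = q n true - q n false := by
        simp [eps]
        ring
      rw [h1, q_diff hn, one_mul]
    · simp only [hE, if_neg hxu, if_neg hxv]
      have h1 : (1 : ℂ) * (1 * q n true) + 1 * (1 * q n false) = q n true + q n false := by ring
      rw [h1, q_sum hn, mul_one]

lemma marginal (hn : 2 ≤ n) (u v : Fin n) (huv : u ≠ v) :
    pr (μ n) (fun G => G.Adj u v) = (1 / 2) * (1 - Real.tan (t n) ^ 2) := by
  rw [pr_eq]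
  have step1 : ∀ s : Fin n → Bool, (if (Γ s).Adj u v then w n s else 0)
      = (w n s + (fun s : Fin n → Bool => eps (s u) * eps (s v)) s * w n s) / 2 := by
    intro s
    by_cases h : s u = s v
    · rw [if_pos (show (Γ s).Adj u v from ⟨huv, h⟩)]
      have he : eps (s u) * eps (s v) = 1 := by
        rw [h]
        cases s v <;> simp [eps]
      simp only [he]
      ring
    · rw [if_neg (show ¬ (Γ s).Adj u v from fun hadj => h hadj.2)]
      have he : eps (s u) * eps (s v) = -1 := by
        cases hsu : s u <;> cases hsv : s v <;> simp_all [eps]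
      simp only [he]
      ring
  rw [Finset.sum_congr rfl fun s _ => step1 s]
  rw [← Finset.sum_div, Finset.sum_add_distrib, w_sum hn]
  have hZ : (∑ s : Fin n → Bool, ((eps (s u) * eps (s v) : ℝ) : ℂ) * ∏ x, q n (s x))
      = ((-(Real.tan (t n) ^ 2) : ℝ) : ℂ) := by
    rw [Finset.sum_congr rfl fun s _ => (hE_prod u v huv s).symm, sum_prod]
    rw [Finset.prod_congr rfl fun x _ => hE_sum hn u v huv x]
    rw [Finset.prod_mul_distrib,
        Finset.prod_ite_eq' Finset.univ u (fun _ => ((Real.tan (t n) : ℂ) * Complex.I)),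
        Finset.prod_ite_eq' Finset.univ v (fun _ => ((Real.tan (t n) : ℂ) * Complex.I))]
    simp only [Finset.mem_univ, if_pos]
    rw [show ((Real.tan (t n) : ℂ) * Complex.I) * ((Real.tan (t n) : ℂ) * Complex.I)
        = ((Real.tan (t n) : ℂ) * (Real.tan (t n) : ℂ)) * (Complex.I * Complex.I) by ring,
      Complex.I_mul_I]
    push_cast
    ring
  have hE2 : (∑ s : Fin n → Bool, (fun s : Fin n → Bool => eps (s u) * eps (s v)) s * w n s)
      = -(Real.tan (t n) ^ 2) := by
    rw [re_bridge (fun s => eps (s u) * eps (s v))]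
    rw [show (∑ s : Fin n → Bool, (((fun s : Fin n → Bool => eps (s u) * eps (s v)) s : ℝ) : ℂ)
          * ∏ x, q n (s x))
        = ∑ s : Fin n → Bool, ((eps (s u) * eps (s v) : ℝ) : ℂ) * ∏ x, q n (s x) from rfl]
    rw [hZ, Complex.ofReal_re]
  rw [hE2]
  ring


lemma isDist (hn : 2 ≤ n) : IsDist (μ n) := by
  constructor
  · intro G
    apply Finset.sum_nonneg
    intro s _
    split_ifs
    · exact w_nonneg hn s
    · exact le_refl 0
  · rw [Finset.sum_congr rfl fun (G : SimpleGraph (Fin n)) _ => μ_eq G, Finset.sum_comm]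
    have inner : ∀ s : Fin n → Bool,
        (∑ G : SimpleGraph (Fin n), ind (Γ s = G) * w n s) = w n s := by
      intro s
      rw [← Finset.sum_mul, sum_ind, one_mul]
    rw [Finset.sum_congr rfl fun s _ => inner s]
    exact w_sum hn

lemma f_local (V : Set (Fin n)) (HV : SimpleGraph V) (s s' : Fin n → Bool)
    (h : ∀ x, x ∈ V → s x = s' x) :
    (if (Γ s).induce V = HV then (1:ℝ) else 0) = (if (Γ s').induce V = HV then (1:ℝ) else 0) := by
  rw [induce_local V s s' h]

lemma f_flip (V : Set (Fin n)) (HV : SimpleGraph V) (s : Fin n → Bool) :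
    (if (Γ (fun x => !(s x))).induce V = HV then (1:ℝ) else 0)
      = (if (Γ s).induce V = HV then (1:ℝ) else 0) := by
  rw [Γ_not]

lemma subIndep (hn : 2 ≤ n) : SubgraphIndep (μ n) := by
  intro V W hd HV HW
  set f : (Fin n → Bool) → ℝ := fun s => ind ((Γ s).induce V = HV) with hf
  set g : (Fin n → Bool) → ℝ := fun s => ind ((Γ s).induce W = HW) with hg
  rw [pr_eq', pr_eq', pr_eq']
  have e1 : ∀ s : Fin n → Bool,
      ind ((Γ s).induce V = HV ∧ (Γ s).induce W = HW) * w n s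
        = (fun s : Fin n → Bool => f s * g s) s * w n s := by
    intro s
    rw [ind_and]
  rw [Finset.sum_congr rfl fun s _ => e1 s]
  rw [re_bridge (fun s => f s * g s), re_bridge f, re_bridge g]
  have cast1 : ∀ s : Fin n → Bool,
      (((fun s : Fin n → Bool => f s * g s) s : ℝ) : ℂ) * ∏ x, q n (s x)
        = (f s : ℂ) * (g s : ℂ) * ∏ x, q n (s x) := by
    intro s
    push_cast
    ring
  rw [Finset.sum_congr rfl fun s _ => cast1 s]
  have loc1 : ∀ s s' : Fin n → Bool, (∀ x, x ∈ V → s x = s' x) → ((f s : ℝ) : ℂ) = (f s' : ℂ) := by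
    intro s s' h
    rw [hf]
    exact_mod_cast congrArg Complex.ofReal (ind_congr (by rw [induce_local V s s' h]))
  have loc2 : ∀ s s' : Fin n → Bool, (∀ x, ¬ x ∈ V → s x = s' x) → ((g s : ℝ) : ℂ) = (g s' : ℂ) := by
    intro s s' h
    rw [hg]
    refine congrArg Complex.ofReal (ind_congr (by
      rw [induce_local W s s' fun x hx => h x fun hxV => Set.disjoint_left.mp hd hxV hx]))
  have hsplit := Zsplit hn (fun x => x ∈ V) (fun s => (f s : ℂ)) (fun s => (g s : ℂ)) loc1 loc2
  rw [hsplit]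
  have flipf : ∀ s : Fin n → Bool, f (fun x => !(s x)) = f s := by
    intro s
    rw [hf]
    exact ind_congr (by rw [Γ_not])
  have flipg : ∀ s : Fin n → Bool, g (fun x => !(s x)) = g s := by
    intro s
    rw [hg]
    exact ind_congr (by rw [Γ_not])
  have im1 : (∑ s : Fin n → Bool, (f s : ℂ) * ∏ x, q n (s x)).im = 0 := Z_real f flipf
  have im2 : (∑ s : Fin n → Bool, (g s : ℂ) * ∏ x, q n (s x)).im = 0 := Z_real g flipg
  rw [Complex.mul_re, im1, im2]
  ring

lemma walk_eq {s : Fin n → Bool} {a b : Fin n} (p : (Γ s).Walk a b) : s a = s b := by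
  induction p with
  | nil => rfl
  | cons h _ ih => exact h.2.trans ih

lemma disconn (hn : 2 ≤ n) (G : SimpleGraph (Fin n)) (hpos : 0 < μ n G) : ¬ G.Connected := by
  have hex : ∃ s : Fin n → Bool, Γ s = G ∧ 0 < w n s := by
    by_contra hno
    push_neg at hno
    have hzero : μ n G = 0 := by
      apply Finset.sum_eq_zero
      intro s _
      by_cases h : Γ s = G
      · have h0 : w n s = 0 := le_antisymm (hno s h) (w_nonneg hn s)
        rw [if_pos h, h0]
      · rw [if_neg h]
    rw [hzero] at hpos
    exact lt_irrefl 0 hpos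
  obtain ⟨s, hΓ, hw⟩ := hex
  have hnc : ∃ a b : Fin n, s a ≠ s b := by
    by_contra hconst
    push_neg at hconst
    have h0 : Fin n := ⟨0, by omega⟩
    have hs : s = fun _ => s h0 := funext fun x => hconst x h0
    rw [hs, w_const hn] at hw
    exact lt_irrefl 0 hw
  obtain ⟨a, b, hab⟩ := hnc
  intro hcon
  have hr : G.Reachable a b := hcon.preconnected a b
  rw [← hΓ] at hr
  obtain ⟨p⟩ := hr
  exact hab (walk_eq p)

end SILB

theorem subgraph_indep_lower_bound (n : ℕ) (hn : 2 ≤ n) :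
    ∃ μ : SimpleGraph (Fin n) → ℝ, IsDist μ ∧ SubgraphIndep μ ∧
      (∀ u v : Fin n, u ≠ v →
        pr μ (fun G => G.Adj u v)
          = (1 / 2) * (1 - Real.tan (Real.pi / (2 * n)) ^ 2)) ∧
      (∀ G, 0 < μ G → ¬ G.Connected) := by
  refine ⟨SILB.μ n, SILB.isDist hn, SILB.subIndep hn, ?_, fun G h => SILB.disconn hn G h⟩
  intro u v huv
  have h := SILB.marginal hn u v huv
  unfold SILB.t at h
  exact h
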